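/- Let βv, μv > 0, let β, γ : [0, ∞) → [0, ∞) be continuous with β integrable on [0, ∞), and let p∞ : [0, ∞) → [0, ∞) be measurable with ∫_0^∞ p∞(a) da = 1. For B > 0 define κ(B) := βv·B/(μv+βv·B), s_B(a) := exp(−κ(B)·∫_0^a β(h) dh), i_B(a) := κ(B)·∫_0^a exp(−∫_τ^a γ(h) dh)·β(τ)·s_B(τ) dτ, and H(B) := ∫_0^∞ p∞(a)·i_B(a) da. If R0 := (βv/μv)·∫_0^∞ p∞(a)·(∫_0^a β(τ)·exp(−∫_τ^a γ(h) dh) dτ) da > 1, then there exists a unique B* ∈ (0, 1) with H(B*) = B*. -/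

import Mathlib

open MeasureTheory

/-- Effective transmission factor `κ(B) = βv·B/(μv+βv·B)`. -/
noncomputable def kappaFn (βv μv B : ℝ) : ℝ := βv * B / (μv + βv * B)

/-- Steady-state susceptible age profile `s_B`. -/
noncomputable def sProf (βv μv : ℝ) (β : ℝ → ℝ) (B a : ℝ) : ℝ :=
  Real.exp (-(kappaFn βv μv B * ∫ h in (0 : ℝ)..a, β h))

/-- Steady-state infected age profile `i_B`. -/
noncomputable def iProf (βv μv : ℝ) (β γ : ℝ → ℝ) (B a : ℝ) : ℝ :=
  kappaFn βv μv B * ∫ τ in (0 : ℝ)..a,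
    Real.exp (-∫ h in τ..a, γ h) * β τ * sProf βv μv β B τ

/-- Force-of-infection map `H(B) = ∫_0^∞ p∞(a)·i_B(a) da`. -/
noncomputable def Hmap (βv μv : ℝ) (β γ pinf : ℝ → ℝ) (B : ℝ) : ℝ :=
  ∫ a in Set.Ioi (0 : ℝ), pinf a * iProf βv μv β γ B a

/-- Basic reproductive number `R0`. -/
noncomputable def R0 (βv μv : ℝ) (β γ pinf : ℝ → ℝ) : ℝ :=
  (βv / μv) * ∫ a in Set.Ioi (0 : ℝ),
    pinf a * ∫ τ in (0 : ℝ)..a, β τ * Real.exp (-∫ h in τ..a, γ h)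

open MeasureTheory Set

namespace EndemicAux

/-- Continuous extension of a function on `[0,∞)` to all of `ℝ`. -/
noncomputable def cext (f : ℝ → ℝ) (x : ℝ) : ℝ := f (max x 0)

lemma cext_cont {f : ℝ → ℝ} (hf : ContinuousOn f (Ici 0)) : Continuous (cext f) :=
  hf.comp_continuous (continuous_id.max continuous_const) fun x => Set.mem_Ici.2 (le_max_right _ _)

lemma cext_eq (f : ℝ → ℝ) {x : ℝ} (hx : 0 ≤ x) : cext f x = f x := by
  simp [cext, max_eq_left hx]

lemma cext_nonneg {f : ℝ → ℝ} (hf : ∀ a : ℝ, 0 ≤ a → 0 ≤ f a) (x : ℝ) : 0 ≤ cext f x :=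
  hf _ (le_max_right _ _)

/-- Primitive `∫_0^x` of the continuous extension. -/
noncomputable def prim (f : ℝ → ℝ) (x : ℝ) : ℝ := ∫ t in (0:ℝ)..x, cext f t

lemma prim_cont {f : ℝ → ℝ} (hf : ContinuousOn f (Ici 0)) : Continuous (prim f) :=
  intervalIntegral.continuous_primitive (fun a b => ((cext_cont hf).intervalIntegrable a b)) 0

lemma prim_zero (f : ℝ → ℝ) : prim f 0 = 0 := intervalIntegral.integral_same

lemma prim_sub {f : ℝ → ℝ} (hf : ContinuousOn f (Ici 0)) (τ a : ℝ) :
    prim f a - prim f τ = ∫ t in τ..a, cext f t :=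
  intervalIntegral.integral_interval_sub_left ((cext_cont hf).intervalIntegrable 0 a)
    ((cext_cont hf).intervalIntegrable 0 τ)

lemma prim_mono {f : ℝ → ℝ} (hf : ContinuousOn f (Ici 0))
    (hf0 : ∀ a : ℝ, 0 ≤ a → 0 ≤ f a) {τ a : ℝ} (h : τ ≤ a) : prim f τ ≤ prim f a := by
  have h1 : 0 ≤ prim f a - prim f τ := by
    rw [prim_sub hf]
    exact intervalIntegral.integral_nonneg h fun u _ => cext_nonneg hf0 u
  linarith

lemma prim_nonneg {f : ℝ → ℝ} (hf : ContinuousOn f (Ici 0))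
    (hf0 : ∀ a : ℝ, 0 ≤ a → 0 ≤ f a) {a : ℝ} (h : 0 ≤ a) : 0 ≤ prim f a := by
  simpa [prim_zero] using prim_mono hf hf0 h

lemma prim_hasDerivAt {f : ℝ → ℝ} (hf : ContinuousOn f (Ici 0)) (x : ℝ) :
    HasDerivAt (prim f) (cext f x) x :=
  intervalIntegral.integral_hasDerivAt_right ((cext_cont hf).intervalIntegrable 0 x)
    ((cext_cont hf).stronglyMeasurableAtFilter _ _) (cext_cont hf).continuousAt

/-- Interval integral of β on `[0,a]` is bounded by its integral on `(0,∞)`. -/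
lemma prim_le_M {f : ℝ → ℝ} (hf : ContinuousOn f (Ici 0))
    (hf0 : ∀ a : ℝ, 0 ≤ a → 0 ≤ f a) (hint : IntegrableOn f (Ioi 0)) {a : ℝ} (ha : 0 ≤ a) :
    prim f a ≤ ∫ t in Ioi (0:ℝ), f t := by
  have h1 : prim f a = ∫ t in Ioc (0:ℝ) a, f t := by
    rw [prim, intervalIntegral.integral_of_le ha]
    refine setIntegral_congr_fun measurableSet_Ioc fun x hx => ?_
    exact cext_eq f (le_of_lt hx.1)
  rw [h1]
  refine setIntegral_mono_set hint ?_ (HasSubset.Subset.eventuallyLE Ioc_subset_Ioi_self)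
  exact ae_restrict_of_forall_mem measurableSet_Ioi fun x hx => hf0 x hx.le


/-! ### The kernel `J` -/

noncomputable def qfun (β γ : ℝ → ℝ) (k τ : ℝ) : ℝ :=
  Real.exp (prim γ τ) * cext β τ * Real.exp (-(k * prim β τ))

noncomputable def Jfun (β γ : ℝ → ℝ) (k a : ℝ) : ℝ :=
  Real.exp (-(prim γ a)) * ∫ τ in (0:ℝ)..a, qfun β γ k τ

variable {β γ : ℝ → ℝ}

lemma qfun_cont (hβ : ContinuousOn β (Ici 0)) (hγ : ContinuousOn γ (Ici 0)) (k : ℝ) :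
    Continuous (qfun β γ k) := by
  unfold qfun
  exact ((Real.continuous_exp.comp (prim_cont hγ)).mul (cext_cont hβ)).mul
    (Real.continuous_exp.comp ((continuous_const.mul (prim_cont hβ)).neg))

lemma qfun_nonneg (hβ0 : ∀ a : ℝ, 0 ≤ a → 0 ≤ β a) (k τ : ℝ) : 0 ≤ qfun β γ k τ := by
  unfold qfun
  have := cext_nonneg hβ0 τ
  positivity

lemma Jfun_cont (hβ : ContinuousOn β (Ici 0)) (hγ : ContinuousOn γ (Ici 0)) (k : ℝ) :
    Continuous (Jfun β γ k) := by
  unfold Jfun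
  exact (Real.continuous_exp.comp (prim_cont hγ).neg).mul
    (intervalIntegral.continuous_primitive (fun a b => (qfun_cont hβ hγ k).intervalIntegrable a b) 0)

lemma Jfun_nonneg (hβ0 : ∀ a : ℝ, 0 ≤ a → 0 ≤ β a) (k : ℝ) {a : ℝ} (ha : 0 ≤ a) :
    0 ≤ Jfun β γ k a := by
  unfold Jfun
  have h1 : 0 ≤ ∫ τ in (0:ℝ)..a, qfun β γ k τ :=
    intervalIntegral.integral_nonneg ha fun u _ => qfun_nonneg hβ0 k u
  positivity

/-- Rewriting the inner integral of the model in terms of `Jfun`. -/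
lemma inner_eq (hβ : ContinuousOn β (Ici 0)) (hγ : ContinuousOn γ (Ici 0))
    (k : ℝ) {a : ℝ} (ha : 0 ≤ a) :
    (∫ τ in (0:ℝ)..a, Real.exp (-∫ h in τ..a, γ h) * β τ *
        Real.exp (-(k * ∫ h in (0:ℝ)..τ, β h))) = Jfun β γ k a := by
  unfold Jfun
  rw [← intervalIntegral.integral_const_mul]
  refine intervalIntegral.integral_congr fun τ hτ => ?_
  rw [uIcc_of_le ha] at hτ
  have hτ0 : (0:ℝ) ≤ τ := hτ.1
  have h2 : (∫ h in (0:ℝ)..τ, β h) = prim β τ := by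
    unfold prim
    refine intervalIntegral.integral_congr fun h hh => ?_
    rw [uIcc_of_le hτ0] at hh
    exact (cext_eq β hh.1).symm
  have h1 : (∫ h in τ..a, γ h) = prim γ a - prim γ τ := by
    rw [prim_sub hγ]
    refine intervalIntegral.integral_congr fun h hh => ?_
    rw [uIcc_of_le hτ.2] at hh
    exact (cext_eq γ (le_trans hτ0 hh.1)).symm
  have h3 : β τ = cext β τ := (cext_eq β hτ0).symm
  rw [h1, h2, h3, qfun, show -(prim γ a - prim γ τ) = prim γ τ + -prim γ a by ring,
    Real.exp_add]
  ring

lemma iProf_eq (βv μv : ℝ) (hβ : ContinuousOn β (Ici 0)) (hγ : ContinuousOn γ (Ici 0))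
    (B : ℝ) {a : ℝ} (ha : 0 ≤ a) :
    iProf βv μv β γ B a = kappaFn βv μv B * Jfun β γ (kappaFn βv μv B) a := by
  rw [iProf]
  congr 1
  rw [← inner_eq hβ hγ (kappaFn βv μv B) ha]
  rfl

lemma R0inner_eq (hβ : ContinuousOn β (Ici 0)) (hγ : ContinuousOn γ (Ici 0))
    {a : ℝ} (ha : 0 ≤ a) :
    (∫ τ in (0:ℝ)..a, β τ * Real.exp (-∫ h in τ..a, γ h)) = Jfun β γ 0 a := by
  rw [← inner_eq hβ hγ 0 ha]
  refine intervalIntegral.integral_congr fun τ hτ => ?_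
  simp [mul_comm]


/-! ### Bounds on `J` -/

lemma Jfun_le_prim (hβ : ContinuousOn β (Ici 0)) (hγ : ContinuousOn γ (Ici 0))
    (hβ0 : ∀ a : ℝ, 0 ≤ a → 0 ≤ β a) (hγ0 : ∀ a : ℝ, 0 ≤ a → 0 ≤ γ a)
    {k a : ℝ} (hk : 0 ≤ k) (ha : 0 ≤ a) : Jfun β γ k a ≤ prim β a := by
  have hmono : (∫ τ in (0:ℝ)..a, qfun β γ k τ) ≤
      ∫ τ in (0:ℝ)..a, Real.exp (prim γ a) * cext β τ := by
    refine intervalIntegral.integral_mono_on ha ((qfun_cont hβ hγ k).intervalIntegrable 0 a)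
      ((continuous_const.mul (cext_cont hβ)).intervalIntegrable 0 a) fun τ hτ => ?_
    have h1 : Real.exp (prim γ τ) ≤ Real.exp (prim γ a) :=
      Real.exp_le_exp.2 (prim_mono hγ hγ0 hτ.2)
    have h2 : Real.exp (-(k * prim β τ)) ≤ 1 := by
      rw [Real.exp_le_one_iff]
      have := prim_nonneg hβ hβ0 hτ.1
      nlinarith
    have h3 := cext_nonneg hβ0 τ
    calc qfun β γ k τ ≤ Real.exp (prim γ τ) * cext β τ * 1 := by
          unfold qfun
          exact mul_le_mul_of_nonneg_left h2 (by positivity)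
      _ = Real.exp (prim γ τ) * cext β τ := mul_one _
      _ ≤ Real.exp (prim γ a) * cext β τ := mul_le_mul_of_nonneg_right h1 h3
  calc Jfun β γ k a ≤ Real.exp (-(prim γ a)) * (Real.exp (prim γ a) * prim β a) := by
        unfold Jfun
        rw [intervalIntegral.integral_const_mul] at hmono
        exact mul_le_mul_of_nonneg_left hmono (Real.exp_nonneg _)
    _ = prim β a := by rw [← mul_assoc, ← Real.exp_add, neg_add_cancel, Real.exp_zero, one_mul]

/-- FTC identity: `∫_0^a k·β·e^{-k·K} = 1 - e^{-k·K(a)}`. -/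
lemma betaExp_integral (hβ : ContinuousOn β (Ici 0)) (k a : ℝ) :
    (∫ τ in (0:ℝ)..a, k * (cext β τ * Real.exp (-(k * prim β τ))))
      = 1 - Real.exp (-(k * prim β a)) := by
  have hder : ∀ x ∈ uIcc (0:ℝ) a,
      HasDerivAt (fun y => -Real.exp (-(k * prim β y)))
        (k * (cext β x * Real.exp (-(k * prim β x)))) x := by
    intro x _
    have h1 := ((prim_hasDerivAt hβ x).const_mul k).neg
    have h2 := h1.exp
    have h3 := h2.neg
    have h4 : HasDerivAt (fun y => -Real.exp (-(k * prim β y)))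
        (-(Real.exp (-(k * prim β x)) * -(k * cext β x))) x := h3
    convert h4 using 1
    ring
  have hint : IntervalIntegrable (fun τ => k * (cext β τ * Real.exp (-(k * prim β τ))))
      volume 0 a :=
    (continuous_const.mul ((cext_cont hβ).mul
      (Real.continuous_exp.comp ((continuous_const.mul (prim_cont hβ)).neg)))).intervalIntegrable 0 a
  rw [intervalIntegral.integral_eq_sub_of_hasDerivAt hder hint]
  rw [prim_zero]
  simp
  ring

lemma kJ_le (hβ : ContinuousOn β (Ici 0)) (hγ : ContinuousOn γ (Ici 0))
    (hβ0 : ∀ a : ℝ, 0 ≤ a → 0 ≤ β a) (hγ0 : ∀ a : ℝ, 0 ≤ a → 0 ≤ γ a)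
    {k a : ℝ} (hk : 0 ≤ k) (ha : 0 ≤ a) :
    k * Jfun β γ k a ≤ 1 - Real.exp (-(k * prim β a)) := by
  have step1 : Jfun β γ k a ≤ ∫ τ in (0:ℝ)..a, cext β τ * Real.exp (-(k * prim β τ)) := by
    unfold Jfun
    rw [← intervalIntegral.integral_const_mul]
    refine intervalIntegral.integral_mono_on ha
      ((continuous_const.mul (qfun_cont hβ hγ k)).intervalIntegrable 0 a)
      (((cext_cont hβ).mul (Real.continuous_exp.comp
        ((continuous_const.mul (prim_cont hβ)).neg))).intervalIntegrable 0 a) fun τ hτ => ?_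
    have h3 := cext_nonneg hβ0 τ
    calc Real.exp (-prim γ a) * qfun β γ k τ
        = Real.exp (prim γ τ + -prim γ a) * (cext β τ * Real.exp (-(k * prim β τ))) := by
          rw [qfun, Real.exp_add]; ring
      _ ≤ 1 * (cext β τ * Real.exp (-(k * prim β τ))) := by
          refine mul_le_mul_of_nonneg_right ?_ (by positivity)
          rw [Real.exp_le_one_iff]
          have := prim_mono hγ hγ0 hτ.2
          linarith
      _ = cext β τ * Real.exp (-(k * prim β τ)) := one_mul _
  calc k * Jfun β γ k a ≤ k * ∫ τ in (0:ℝ)..a, cext β τ * Real.exp (-(k * prim β τ)) :=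
        mul_le_mul_of_nonneg_left step1 hk
    _ = ∫ τ in (0:ℝ)..a, k * (cext β τ * Real.exp (-(k * prim β τ))) :=
        (intervalIntegral.integral_const_mul _ _).symm
    _ = 1 - Real.exp (-(k * prim β a)) := betaExp_integral hβ k a

lemma Jfun_anti (hβ : ContinuousOn β (Ici 0)) (hγ : ContinuousOn γ (Ici 0))
    (hβ0 : ∀ a : ℝ, 0 ≤ a → 0 ≤ β a)
    {k₁ k₂ a : ℝ} (hk₁ : 0 ≤ k₁) (hkk : k₁ ≤ k₂) (ha : 0 ≤ a) :
    Jfun β γ k₂ a ≤ Jfun β γ k₁ a := by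
  unfold Jfun
  refine mul_le_mul_of_nonneg_left ?_ (Real.exp_nonneg _)
  refine intervalIntegral.integral_mono_on ha ((qfun_cont hβ hγ k₂).intervalIntegrable 0 a)
    ((qfun_cont hβ hγ k₁).intervalIntegrable 0 a) fun τ hτ => ?_
  unfold qfun
  have h3 := cext_nonneg hβ0 τ
  have hK := prim_nonneg hβ hβ0 hτ.1
  refine mul_le_mul_of_nonneg_left ?_ (by positivity)
  exact Real.exp_le_exp.2 (by nlinarith)

/-- Lipschitz bound for `e^{-x}` on nonnegative reals. -/
lemma abs_exp_neg_sub {x y : ℝ} (hx : 0 ≤ x) (hy : 0 ≤ y) :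
    |Real.exp (-x) - Real.exp (-y)| ≤ |x - y| := by
  have key : ∀ u v : ℝ, 0 ≤ u → u ≤ v → Real.exp (-u) - Real.exp (-v) ≤ v - u := by
    intro u v hu huv
    have h1 : Real.exp (-v) = Real.exp (-u) * Real.exp (u - v) := by
      rw [← Real.exp_add]; ring_nf
    have h2 := Real.add_one_le_exp (u - v)
    have h3 : Real.exp (-u) ≤ 1 := Real.exp_le_one_iff.2 (by linarith)
    have h4 := Real.exp_pos (-u)
    nlinarith
  rcases le_total x y with h | h
  · have h1 : Real.exp (-y) ≤ Real.exp (-x) := Real.exp_le_exp.2 (by linarith)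
    rw [abs_of_nonneg (by linarith), abs_of_nonpos (by linarith)]
    have := key x y hx h
    linarith
  · have h1 : Real.exp (-x) ≤ Real.exp (-y) := Real.exp_le_exp.2 (by linarith)
    rw [abs_of_nonpos (by linarith), abs_of_nonneg (by linarith)]
    have := key y x hy h
    linarith


lemma Jfun_lip (hβ : ContinuousOn β (Ici 0)) (hγ : ContinuousOn γ (Ici 0))
    (hβ0 : ∀ a : ℝ, 0 ≤ a → 0 ≤ β a) (hγ0 : ∀ a : ℝ, 0 ≤ a → 0 ≤ γ a)
    {M : ℝ} (hM : ∀ x : ℝ, 0 ≤ x → prim β x ≤ M)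
    {k₁ k₂ a : ℝ} (hk₁ : 0 ≤ k₁) (hk₂ : 0 ≤ k₂) (ha : 0 ≤ a) :
    |Jfun β γ k₁ a - Jfun β γ k₂ a| ≤ M ^ 2 * |k₁ - k₂| := by
  have hM0 : 0 ≤ M := le_trans (by simpa [prim_zero] using le_refl (0:ℝ)) (hM 0 le_rfl)
  have hint1 := (qfun_cont hβ hγ k₁).intervalIntegrable (μ := volume) 0 a
  have hint2 := (qfun_cont hβ hγ k₂).intervalIntegrable (μ := volume) 0 a
  have hsub : (∫ τ in (0:ℝ)..a, qfun β γ k₁ τ) - (∫ τ in (0:ℝ)..a, qfun β γ k₂ τ)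
      = ∫ τ in (0:ℝ)..a, (qfun β γ k₁ τ - qfun β γ k₂ τ) :=
    (intervalIntegral.integral_sub hint1 hint2).symm
  have habs : |(∫ τ in (0:ℝ)..a, (qfun β γ k₁ τ - qfun β γ k₂ τ))|
      ≤ ∫ τ in (0:ℝ)..a, |qfun β γ k₁ τ - qfun β γ k₂ τ| :=
    intervalIntegral.abs_integral_le_integral_abs ha
  have hpt : ∀ τ ∈ Icc (0:ℝ) a, |qfun β γ k₁ τ - qfun β γ k₂ τ|
      ≤ Real.exp (prim γ a) * (M * |k₁ - k₂|) * cext β τ := by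
    intro τ hτ
    have hKτ := prim_nonneg hβ hβ0 hτ.1
    have hcb := cext_nonneg hβ0 τ
    have hfac : qfun β γ k₁ τ - qfun β γ k₂ τ = (Real.exp (prim γ τ) * cext β τ) *
        (Real.exp (-(k₁ * prim β τ)) - Real.exp (-(k₂ * prim β τ))) := by
      unfold qfun; ring
    rw [hfac, abs_mul, abs_of_nonneg (by positivity)]
    have hexp : |Real.exp (-(k₁ * prim β τ)) - Real.exp (-(k₂ * prim β τ))|
        ≤ |k₁ - k₂| * prim β τ := by
      have h := abs_exp_neg_sub (x := k₁ * prim β τ) (y := k₂ * prim β τ)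
        (by positivity) (by positivity)
      calc |Real.exp (-(k₁ * prim β τ)) - Real.exp (-(k₂ * prim β τ))|
          ≤ |k₁ * prim β τ - k₂ * prim β τ| := h
        _ = |k₁ - k₂| * prim β τ := by
            rw [show k₁ * prim β τ - k₂ * prim β τ = (k₁ - k₂) * prim β τ by ring,
              abs_mul, abs_of_nonneg hKτ]
    have hexp2 : Real.exp (prim γ τ) ≤ Real.exp (prim γ a) :=
      Real.exp_le_exp.2 (prim_mono hγ hγ0 hτ.2)
    calc Real.exp (prim γ τ) * cext β τ *
          |Real.exp (-(k₁ * prim β τ)) - Real.exp (-(k₂ * prim β τ))|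
          ≤ Real.exp (prim γ τ) * cext β τ * (|k₁ - k₂| * prim β τ) :=
            mul_le_mul_of_nonneg_left hexp (by positivity)
        _ ≤ Real.exp (prim γ τ) * cext β τ * (|k₁ - k₂| * M) :=
            mul_le_mul_of_nonneg_left
              (mul_le_mul_of_nonneg_left (hM τ hτ.1) (abs_nonneg _)) (by positivity)
        _ ≤ Real.exp (prim γ a) * cext β τ * (|k₁ - k₂| * M) :=
            mul_le_mul_of_nonneg_right (mul_le_mul_of_nonneg_right hexp2 hcb) (by positivity)
        _ = Real.exp (prim γ a) * (M * |k₁ - k₂|) * cext β τ := by ring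
  have hub : (∫ τ in (0:ℝ)..a, |qfun β γ k₁ τ - qfun β γ k₂ τ|)
      ≤ Real.exp (prim γ a) * (M * |k₁ - k₂|) * prim β a := by
    have h1 : (∫ τ in (0:ℝ)..a, |qfun β γ k₁ τ - qfun β γ k₂ τ|)
        ≤ ∫ τ in (0:ℝ)..a, Real.exp (prim γ a) * (M * |k₁ - k₂|) * cext β τ := by
      refine intervalIntegral.integral_mono_on ha ?_ ?_ hpt
      · exact ((qfun_cont hβ hγ k₁).sub (qfun_cont hβ hγ k₂)).abs.intervalIntegrable 0 a
      · exact (continuous_const.mul (cext_cont hβ)).intervalIntegrable 0 a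
    rwa [intervalIntegral.integral_const_mul] at h1
  have hprimM := hM a ha
  have hJd : |Jfun β γ k₁ a - Jfun β γ k₂ a| = Real.exp (-(prim γ a)) *
      |(∫ τ in (0:ℝ)..a, qfun β γ k₁ τ) - (∫ τ in (0:ℝ)..a, qfun β γ k₂ τ)| := by
    unfold Jfun
    rw [← mul_sub, abs_mul, abs_of_nonneg (Real.exp_nonneg _)]
  rw [hJd, hsub]
  calc Real.exp (-(prim γ a)) * |(∫ τ in (0:ℝ)..a, (qfun β γ k₁ τ - qfun β γ k₂ τ))|
      ≤ Real.exp (-(prim γ a)) * (Real.exp (prim γ a) * (M * |k₁ - k₂|) * prim β a) :=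
        mul_le_mul_of_nonneg_left (le_trans habs hub) (Real.exp_nonneg _)
    _ = (M * |k₁ - k₂|) * prim β a := by
        rw [show Real.exp (-(prim γ a)) * (Real.exp (prim γ a) * (M * |k₁ - k₂|) * prim β a)
          = (Real.exp (-(prim γ a)) * Real.exp (prim γ a)) * ((M * |k₁ - k₂|) * prim β a) by ring,
          ← Real.exp_add, neg_add_cancel, Real.exp_zero, one_mul]
    _ ≤ M ^ 2 * |k₁ - k₂| := by
        have h0 : 0 ≤ M * |k₁ - k₂| * (M - prim β a) :=
          mul_nonneg (mul_nonneg hM0 (abs_nonneg _)) (by linarith)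
        nlinarith [h0]

/-! ### The function `φ` -/

noncomputable def phiFun (β γ pinf : ℝ → ℝ) (k : ℝ) : ℝ :=
  ∫ a in Ioi (0:ℝ), pinf a * Jfun β γ k a


variable {pinf : ℝ → ℝ}

lemma pinf_int (hp_meas : Measurable pinf) (hp_int : ∫ a in Ioi (0:ℝ), pinf a = 1) :
    IntegrableOn pinf (Ioi 0) := by
  by_contra h
  rw [integral_undef h] at hp_int
  norm_num at hp_int

lemma M_nonneg (hβ0 : ∀ a : ℝ, 0 ≤ a → 0 ≤ β a) : 0 ≤ ∫ t in Ioi (0:ℝ), β t :=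
  setIntegral_nonneg measurableSet_Ioi fun x hx => hβ0 x (le_of_lt hx)

lemma phi_int (hβ : ContinuousOn β (Ici 0)) (hγ : ContinuousOn γ (Ici 0))
    (hβ0 : ∀ a : ℝ, 0 ≤ a → 0 ≤ β a) (hγ0 : ∀ a : ℝ, 0 ≤ a → 0 ≤ γ a)
    (hβ_int : IntegrableOn β (Ioi 0))
    (hp_meas : Measurable pinf) (hp0 : ∀ a : ℝ, 0 ≤ a → 0 ≤ pinf a)
    (hp_int : ∫ a in Ioi (0:ℝ), pinf a = 1)
    {k : ℝ} (hk : 0 ≤ k) :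
    IntegrableOn (fun a => pinf a * Jfun β γ k a) (Ioi 0) := by
  set M : ℝ := ∫ t in Ioi (0:ℝ), β t with hMdef
  have hM0 : 0 ≤ M := M_nonneg hβ0
  refine Integrable.mono ((pinf_int hp_meas hp_int).const_mul M) ?_ ?_
  · exact ((hp_meas.aestronglyMeasurable).mul
      (Jfun_cont hβ hγ k).aestronglyMeasurable).restrict
  · refine ae_restrict_of_forall_mem measurableSet_Ioi fun a ha => ?_
    have ha0 : (0:ℝ) ≤ a := le_of_lt ha
    have hJ0 := Jfun_nonneg (γ := γ) hβ0 k ha0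
    have hJM : Jfun β γ k a ≤ M :=
      (Jfun_le_prim hβ hγ hβ0 hγ0 hk ha0).trans (prim_le_M hβ hβ0 hβ_int ha0)
    rw [Real.norm_eq_abs, Real.norm_eq_abs,
      abs_of_nonneg (mul_nonneg (hp0 a ha0) hJ0),
      abs_of_nonneg (mul_nonneg hM0 (hp0 a ha0))]
    calc pinf a * Jfun β γ k a ≤ pinf a * M := mul_le_mul_of_nonneg_left hJM (hp0 a ha0)
      _ = M * pinf a := mul_comm _ _

lemma phi_anti (hβ : ContinuousOn β (Ici 0)) (hγ : ContinuousOn γ (Ici 0))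
    (hβ0 : ∀ a : ℝ, 0 ≤ a → 0 ≤ β a) (hγ0 : ∀ a : ℝ, 0 ≤ a → 0 ≤ γ a)
    (hβ_int : IntegrableOn β (Ioi 0))
    (hp_meas : Measurable pinf) (hp0 : ∀ a : ℝ, 0 ≤ a → 0 ≤ pinf a)
    (hp_int : ∫ a in Ioi (0:ℝ), pinf a = 1)
    {k₁ k₂ : ℝ} (hk₁ : 0 ≤ k₁) (hkk : k₁ ≤ k₂) :
    phiFun β γ pinf k₂ ≤ phiFun β γ pinf k₁ :=
  setIntegral_mono_on
    (phi_int hβ hγ hβ0 hγ0 hβ_int hp_meas hp0 hp_int (hk₁.trans hkk))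
    (phi_int hβ hγ hβ0 hγ0 hβ_int hp_meas hp0 hp_int hk₁)
    measurableSet_Ioi fun a ha =>
      mul_le_mul_of_nonneg_left (Jfun_anti hβ hγ hβ0 hk₁ hkk (le_of_lt ha)) (hp0 a (le_of_lt ha))

lemma kphi_le (hβ : ContinuousOn β (Ici 0)) (hγ : ContinuousOn γ (Ici 0))
    (hβ0 : ∀ a : ℝ, 0 ≤ a → 0 ≤ β a) (hγ0 : ∀ a : ℝ, 0 ≤ a → 0 ≤ γ a)
    (hβ_int : IntegrableOn β (Ioi 0))
    (hp_meas : Measurable pinf) (hp0 : ∀ a : ℝ, 0 ≤ a → 0 ≤ pinf a)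
    (hp_int : ∫ a in Ioi (0:ℝ), pinf a = 1)
    {k : ℝ} (hk : 0 ≤ k) :
    k * phiFun β γ pinf k ≤ 1 - Real.exp (-(k * ∫ t in Ioi (0:ℝ), β t)) := by
  set M : ℝ := ∫ t in Ioi (0:ℝ), β t with hMdef
  have h1 : k * phiFun β γ pinf k = ∫ a in Ioi (0:ℝ), k * (pinf a * Jfun β γ k a) := by
    rw [phiFun, ← integral_const_mul]
  have h2 : (∫ a in Ioi (0:ℝ), k * (pinf a * Jfun β γ k a))
      ≤ ∫ a in Ioi (0:ℝ), pinf a * (1 - Real.exp (-(k * M))) := by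
    refine setIntegral_mono_on
      ((phi_int hβ hγ hβ0 hγ0 hβ_int hp_meas hp0 hp_int hk).const_mul k)
      ((pinf_int hp_meas hp_int).mul_const _) measurableSet_Ioi fun a ha => ?_
    have ha0 : (0:ℝ) ≤ a := le_of_lt ha
    have hkJ := kJ_le hβ hγ hβ0 hγ0 hk ha0
    have hexp : Real.exp (-(k * M)) ≤ Real.exp (-(k * prim β a)) := by
      refine Real.exp_le_exp.2 ?_
      have := prim_le_M hβ hβ0 hβ_int ha0
      nlinarith
    rw [show k * (pinf a * Jfun β γ k a) = pinf a * (k * Jfun β γ k a) by ring]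
    exact mul_le_mul_of_nonneg_left (by linarith) (hp0 a ha0)
  have h3 : (∫ a in Ioi (0:ℝ), pinf a * (1 - Real.exp (-(k * M))))
      = 1 - Real.exp (-(k * M)) := by
    rw [integral_mul_const, hp_int, one_mul]
  linarith [h1 ▸ h2, h3 ▸ h2]

lemma phi_lip (hβ : ContinuousOn β (Ici 0)) (hγ : ContinuousOn γ (Ici 0))
    (hβ0 : ∀ a : ℝ, 0 ≤ a → 0 ≤ β a) (hγ0 : ∀ a : ℝ, 0 ≤ a → 0 ≤ γ a)
    (hβ_int : IntegrableOn β (Ioi 0))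
    (hp_meas : Measurable pinf) (hp0 : ∀ a : ℝ, 0 ≤ a → 0 ≤ pinf a)
    (hp_int : ∫ a in Ioi (0:ℝ), pinf a = 1)
    {k₁ k₂ : ℝ} (hk₁ : 0 ≤ k₁) (hk₂ : 0 ≤ k₂) :
    |phiFun β γ pinf k₁ - phiFun β γ pinf k₂|
      ≤ (∫ t in Ioi (0:ℝ), β t) ^ 2 * |k₁ - k₂| := by
  set M : ℝ := ∫ t in Ioi (0:ℝ), β t with hMdef
  have hint₁ := phi_int hβ hγ hβ0 hγ0 hβ_int hp_meas hp0 hp_int hk₁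
  have hint₂ := phi_int hβ hγ hβ0 hγ0 hβ_int hp_meas hp0 hp_int hk₂
  have hsub : phiFun β γ pinf k₁ - phiFun β γ pinf k₂
      = ∫ a in Ioi (0:ℝ), (pinf a * Jfun β γ k₁ a - pinf a * Jfun β γ k₂ a) :=
    (integral_sub hint₁ hint₂).symm
  rw [hsub]
  have habs : |∫ a in Ioi (0:ℝ), (pinf a * Jfun β γ k₁ a - pinf a * Jfun β γ k₂ a)|
      ≤ ∫ a in Ioi (0:ℝ), ‖pinf a * Jfun β γ k₁ a - pinf a * Jfun β γ k₂ a‖ := by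
    rw [← Real.norm_eq_abs]
    exact norm_integral_le_integral_norm _
  refine habs.trans ?_
  have hmono : (∫ a in Ioi (0:ℝ), ‖pinf a * Jfun β γ k₁ a - pinf a * Jfun β γ k₂ a‖)
      ≤ ∫ a in Ioi (0:ℝ), pinf a * (M ^ 2 * |k₁ - k₂|) := by
    refine setIntegral_mono_on (hint₁.sub hint₂).norm
      ((pinf_int hp_meas hp_int).mul_const _) measurableSet_Ioi fun a ha => ?_
    have ha0 : (0:ℝ) ≤ a := le_of_lt ha
    rw [Real.norm_eq_abs, ← mul_sub, abs_mul, abs_of_nonneg (hp0 a ha0)]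
    exact mul_le_mul_of_nonneg_left
      (Jfun_lip hβ hγ hβ0 hγ0 (fun x hx => prim_le_M hβ hβ0 hβ_int hx) hk₁ hk₂ ha0)
      (hp0 a ha0)
  refine hmono.trans ?_
  rw [integral_mul_const, hp_int, one_mul]

lemma phi_contOn (hβ : ContinuousOn β (Ici 0)) (hγ : ContinuousOn γ (Ici 0))
    (hβ0 : ∀ a : ℝ, 0 ≤ a → 0 ≤ β a) (hγ0 : ∀ a : ℝ, 0 ≤ a → 0 ≤ γ a)
    (hβ_int : IntegrableOn β (Ioi 0))
    (hp_meas : Measurable pinf) (hp0 : ∀ a : ℝ, 0 ≤ a → 0 ≤ pinf a)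
    (hp_int : ∫ a in Ioi (0:ℝ), pinf a = 1) :
    ContinuousOn (phiFun β γ pinf) (Ici 0) := by
  set M : ℝ := ∫ t in Ioi (0:ℝ), β t with hMdef
  refine LipschitzOnWith.continuousOn
    (LipschitzOnWith.of_dist_le_mul (K := Real.toNNReal (M ^ 2)) fun x hx y hy => ?_)
  rw [Real.dist_eq, Real.dist_eq, Real.coe_toNNReal _ (sq_nonneg M)]
  exact phi_lip hβ hγ hβ0 hγ0 hβ_int hp_meas hp0 hp_int hx hy


lemma Hmap_eq (βv μv : ℝ) (hβ : ContinuousOn β (Ici 0)) (hγ : ContinuousOn γ (Ici 0))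
    (B : ℝ) :
    Hmap βv μv β γ pinf B = kappaFn βv μv B * phiFun β γ pinf (kappaFn βv μv B) := by
  rw [Hmap, phiFun, ← integral_const_mul]
  refine setIntegral_congr_fun measurableSet_Ioi fun a ha => ?_
  rw [iProf_eq βv μv hβ hγ B (le_of_lt ha)]
  ring

lemma R0_eq (βv μv : ℝ) (hβ : ContinuousOn β (Ici 0)) (hγ : ContinuousOn γ (Ici 0)) :
    R0 βv μv β γ pinf = (βv / μv) * phiFun β γ pinf 0 := by
  rw [R0, phiFun]
  congr 1
  exact setIntegral_congr_fun measurableSet_Ioi fun a ha => by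
    rw [R0inner_eq hβ hγ (le_of_lt ha)]

/-! ### Elementary facts about `κ` -/

lemma denom_pos {βv μv : ℝ} (hβv : 0 < βv) (hμv : 0 < μv) {B : ℝ} (hB : 0 ≤ B) :
    0 < μv + βv * B := by nlinarith

lemma kappa_eq (βv μv B : ℝ) : kappaFn βv μv B = B * (βv / (μv + βv * B)) := by
  rw [kappaFn]; ring

lemma kappa_nonneg {βv μv : ℝ} (hβv : 0 < βv) (hμv : 0 < μv) {B : ℝ} (hB : 0 ≤ B) :
    0 ≤ kappaFn βv μv B :=
  div_nonneg (by positivity) (denom_pos hβv hμv hB).le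

lemma kappa_mono {βv μv : ℝ} (hβv : 0 < βv) (hμv : 0 < μv) {B₁ B₂ : ℝ}
    (hB₁ : 0 ≤ B₁) (h : B₁ ≤ B₂) : kappaFn βv μv B₁ ≤ kappaFn βv μv B₂ := by
  unfold kappaFn
  rw [div_le_div_iff₀ (denom_pos hβv hμv hB₁) (denom_pos hβv hμv (hB₁.trans h))]
  nlinarith [mul_le_mul_of_nonneg_left h (mul_nonneg hβv.le hμv.le)]

lemma coeff_anti {βv μv : ℝ} (hβv : 0 < βv) (hμv : 0 < μv) {B₁ B₂ : ℝ}
    (hB₁ : 0 ≤ B₁) (h : B₁ < B₂) : βv / (μv + βv * B₂) < βv / (μv + βv * B₁) :=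
  div_lt_div_of_pos_left hβv (denom_pos hβv hμv hB₁) (by nlinarith)

lemma kappa_contOn {βv μv : ℝ} (hβv : 0 < βv) (hμv : 0 < μv) :
    ContinuousOn (fun B => kappaFn βv μv B) (Ici 0) := by
  unfold kappaFn
  exact ContinuousOn.div (continuous_const.mul continuous_id).continuousOn
    (continuous_const.add (continuous_const.mul continuous_id)).continuousOn
    fun x hx => (denom_pos hβv hμv hx).ne'

end EndemicAux

open EndemicAux in
/-- if `R0 > 1`, there exists a unique `B* ∈ (0,1)` with `H(B*) = B*`. -/
theorem endemic_fixed_point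
    (βv μv : ℝ) (hβv : 0 < βv) (hμv : 0 < μv)
    (β γ : ℝ → ℝ) (hβ_cont : ContinuousOn β (Set.Ici 0)) (hγ_cont : ContinuousOn γ (Set.Ici 0))
    (hβ_nonneg : ∀ a : ℝ, 0 ≤ a → 0 ≤ β a) (hγ_nonneg : ∀ a : ℝ, 0 ≤ a → 0 ≤ γ a)
    (hβ_int : MeasureTheory.IntegrableOn β (Set.Ioi 0))
    (pinf : ℝ → ℝ) (hp_meas : Measurable pinf) (hp_nonneg : ∀ a : ℝ, 0 ≤ a → 0 ≤ pinf a)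
    (hp_int : ∫ a in Set.Ioi (0 : ℝ), pinf a = 1)
    (hR0 : 1 < R0 βv μv β γ pinf)
    : ∃! Bstar : ℝ, Bstar ∈ Set.Ioo (0 : ℝ) 1 ∧ Hmap βv μv β γ pinf Bstar = Bstar := by
  classical
  set φ : ℝ → ℝ := phiFun β γ pinf with hφdef
  set κ : ℝ → ℝ := fun B => kappaFn βv μv B with hκdef
  have hHeq : ∀ B : ℝ, Hmap βv μv β γ pinf B = κ B * φ (κ B) := fun B =>
    Hmap_eq βv μv hβ_cont hγ_cont B
  have hκnn : ∀ B : ℝ, 0 ≤ B → 0 ≤ κ B := fun B hB => kappa_nonneg hβv hμv hB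
  have hφcont : ContinuousOn φ (Ici 0) :=
    phi_contOn hβ_cont hγ_cont hβ_nonneg hγ_nonneg hβ_int hp_meas hp_nonneg hp_int
  have hκcont : ContinuousOn κ (Ici 0) := kappa_contOn hβv hμv
  have hΨcont : ContinuousOn (fun B => κ B * φ (κ B)) (Ici 0) :=
    hκcont.mul (hφcont.comp hκcont fun x hx => hκnn x hx)
  -- the auxiliary function G
  set G : ℝ → ℝ := fun B => (βv / (μv + βv * B)) * φ (κ B) with hGdef
  have hGcont : ContinuousOn G (Ici 0) := by
    refine ContinuousOn.mul (ContinuousOn.div continuous_const.continuousOn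
      (continuous_const.add (continuous_const.mul continuous_id)).continuousOn
      fun x hx => (denom_pos hβv hμv hx).ne') (hφcont.comp hκcont fun x hx => hκnn x hx)
  have hκ0 : κ 0 = 0 := by simp [hκdef, kappaFn]
  have hG0 : G 0 = R0 βv μv β γ pinf := by
    rw [hGdef]
    simp only [mul_zero, add_zero, hκ0]
    rw [R0_eq βv μv hβ_cont hγ_cont]
  have hG0gt : 1 < G 0 := hG0 ▸ hR0
  -- pick a small ε > 0 with G ε > 1
  have h1 : ContinuousWithinAt G (Ioi 0) 0 :=
    ((hGcont 0 self_mem_Ici).mono Ioi_subset_Ici_self)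
  have hev1 : ∀ᶠ x in nhdsWithin 0 (Ioi 0), 1 < G x := h1.eventually_const_lt hG0gt
  have hev2 : ∀ᶠ x in nhdsWithin (0:ℝ) (Ioi (0:ℝ)), x < (1:ℝ) :=
    (gt_mem_nhds (by norm_num : (0:ℝ) < 1)).filter_mono nhdsWithin_le_nhds
  have hev3 : ∀ᶠ x in nhdsWithin 0 (Ioi 0), x ∈ Ioi (0:ℝ) := eventually_mem_nhdsWithin
  obtain ⟨ε, ⟨hεG, hεlt⟩, hεpos⟩ := ((hev1.and hev2).and hev3).exists
  have hεpos' : (0:ℝ) < ε := hεpos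
  -- value at ε is above the diagonal
  have hκε : κ ε = ε * (βv / (μv + βv * ε)) := kappa_eq βv μv ε
  have hΨε : ε < κ ε * φ (κ ε) := by
    have hGval : ε * G ε = κ ε * φ (κ ε) := by
      show ε * (βv / (μv + βv * ε) * φ (κ ε)) = κ ε * φ (κ ε)
      rw [hκε]
      ring
    rw [← hGval]
    nlinarith
  -- value at 1 is below the diagonal
  have hΨ1 : κ 1 * φ (κ 1) < 1 := by
    have hb := kphi_le hβ_cont hγ_cont hβ_nonneg hγ_nonneg hβ_int hp_meas hp_nonneg hp_int
      (hκnn 1 zero_le_one)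
    have := Real.exp_pos (-(κ 1 * ∫ t in Ioi (0:ℝ), β t))
    linarith
  -- IVT
  have hsub : Icc ε 1 ⊆ Ici (0:ℝ) := fun x hx => le_trans hεpos'.le hx.1
  have hfc : ContinuousOn (fun B => κ B * φ (κ B) - B) (Icc ε 1) :=
    (hΨcont.mono hsub).sub continuousOn_id
  have h0mem : (0:ℝ) ∈ Ioo (κ 1 * φ (κ 1) - 1) (κ ε * φ (κ ε) - ε) :=
    ⟨by linarith, by linarith⟩
  obtain ⟨Bs, hBmem, hBfix⟩ := intermediate_value_Ioo' hεlt.le hfc h0mem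
  have hBfix' : κ Bs * φ (κ Bs) = Bs := by
    have h := hBfix
    simp only [sub_eq_zero] at h
    exact h
  have hBso : Bs ∈ Set.Ioo (0:ℝ) 1 := ⟨lt_trans hεpos' hBmem.1, hBmem.2⟩
  -- uniqueness core
  have core : ∀ x y : ℝ, x ∈ Set.Ioo (0:ℝ) 1 → y ∈ Set.Ioo (0:ℝ) 1 →
      κ x * φ (κ x) = x → κ y * φ (κ y) = y → x < y → False := by
    intro x y hx hy hfx hfy hxy
    set cx : ℝ := βv / (μv + βv * x) with hcx
    set cy : ℝ := βv / (μv + βv * y) with hcy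
    have hcxpos : 0 < cx := div_pos hβv (denom_pos hβv hμv hx.1.le)
    have hcypos : 0 < cy := div_pos hβv (denom_pos hβv hμv hy.1.le)
    have h1x : cx * φ (κ x) = 1 := by
      have hκx : κ x = x * cx := kappa_eq βv μv x
      set t := φ (κ x) with ht
      have h := hfx
      rw [hκx] at h
      refine mul_left_cancel₀ (ne_of_gt hx.1) (?_ : x * (cx * t) = x * 1)
      rw [mul_one]
      linear_combination h
    have h1y : cy * φ (κ y) = 1 := by
      have hκy : κ y = y * cy := kappa_eq βv μv y
      set t := φ (κ y) with ht
      have h := hfy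
      rw [hκy] at h
      refine mul_left_cancel₀ (ne_of_gt hy.1) (?_ : y * (cy * t) = y * 1)
      rw [mul_one]
      linear_combination h
    have hφypos : 0 < φ (κ y) := by nlinarith
    have hφle : φ (κ y) ≤ φ (κ x) :=
      phi_anti hβ_cont hγ_cont hβ_nonneg hγ_nonneg hβ_int hp_meas hp_nonneg hp_int
        (hκnn x hx.1.le) (kappa_mono hβv hμv hx.1.le hxy.le)
    have hclt : cy < cx := coeff_anti hβv hμv hx.1.le hxy
    nlinarith
  refine ⟨Bs, ⟨hBso, by rw [hHeq]; exact hBfix'⟩, ?_⟩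
  rintro y ⟨hymem, hyfix⟩
  have hyfix' : κ y * φ (κ y) = y := by rw [← hHeq]; exact hyfix
  rcases lt_trichotomy y Bs with h | h | h
  · exact absurd (core y Bs hymem hBso hyfix' hBfix' h) not_false
  · exact h
  · exact absurd (core Bs y hBso hymem hBfix' hyfix' h) not_false
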